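/- arXiv:1502.05775 — 2 statements merged into one kernel-verified Lean document; each statement's English description precedes it below -/
import Mathlib

section
/- If random variables X, Y, Q on finite alphabets satisfy the double Markov conditions X–Y–Q (i.e., X and Q are conditionally independent given Y) and Y–X–Q, then there exists a random variable Q' that is a deterministic function of X and also a deterministic function of Y (i.e., H(Q'|X)=H(Q'|Y)=0), such that XY–Q'–Q forms a Markov chain (Q is conditionally independent of (X,Y) given Q'). -/
open Finset

/-- A probability mass function on a finite sample space. -/
def IsPMF {Ω : Type*} [Fintype Ω] (p : Ω → ℝ) : Prop :=
  (∀ ω, 0 ≤ p ω) ∧ ∑ ω, p ω = 1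

/-- Probability that the random variable `X` takes the value `x`. -/
noncomputable def pr {Ω 𝒳 : Type*} [Fintype Ω] [DecidableEq 𝒳]
    (p : Ω → ℝ) (X : Ω → 𝒳) (x : 𝒳) : ℝ :=
  ∑ ω, if X ω = x then p ω else 0

/-- Shannon entropy (in bits) of the random variable `X` under `p`. -/
noncomputable def H {Ω 𝒳 : Type*} [Fintype Ω] [Fintype 𝒳] [DecidableEq 𝒳]
    (p : Ω → ℝ) (X : Ω → 𝒳) : ℝ :=
  -∑ x, pr p X x * Real.logb 2 (pr p X x)

/-- Conditional entropy `H(X|Y)`. -/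
noncomputable def condH {Ω 𝒳 𝒴 : Type*} [Fintype Ω] [Fintype 𝒳] [DecidableEq 𝒳]
    [Fintype 𝒴] [DecidableEq 𝒴] (p : Ω → ℝ) (X : Ω → 𝒳) (Y : Ω → 𝒴) : ℝ :=
  H p (fun ω => (X ω, Y ω)) - H p Y

/-- Mutual information `I(X;Y)`. -/
noncomputable def MI {Ω 𝒳 𝒴 : Type*} [Fintype Ω] [Fintype 𝒳] [DecidableEq 𝒳]
    [Fintype 𝒴] [DecidableEq 𝒴] (p : Ω → ℝ) (X : Ω → 𝒳) (Y : Ω → 𝒴) : ℝ :=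
  H p X + H p Y - H p (fun ω => (X ω, Y ω))

/-- Conditional mutual information `I(X;Y|Z)`. -/
noncomputable def condMI {Ω 𝒳 𝒴 𝒵 : Type*} [Fintype Ω] [Fintype 𝒳] [DecidableEq 𝒳]
    [Fintype 𝒴] [DecidableEq 𝒴] [Fintype 𝒵] [DecidableEq 𝒵]
    (p : Ω → ℝ) (X : Ω → 𝒳) (Y : Ω → 𝒴) (Z : Ω → 𝒵) : ℝ :=
  condH p X Z - condH p X (fun ω => (Y ω, Z ω))

/-- Markov chain A–B–C in pmf form: p(a,b,c)·p(b) = p(a,b)·p(b,c). -/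
def MarkovPmf {Ω 𝒜 ℬ 𝒞 : Type*} [Fintype Ω] [DecidableEq 𝒜] [DecidableEq ℬ] [DecidableEq 𝒞]
    (p : Ω → ℝ) (A : Ω → 𝒜) (B : Ω → ℬ) (C : Ω → 𝒞) : Prop :=
  ∀ a b c, pr p (fun ω => (A ω, B ω, C ω)) (a, b, c) * pr p B b =
    pr p (fun ω => (A ω, B ω)) (a, b) * pr p (fun ω => (B ω, C ω)) (b, c)

section Helpers

variable {Ω 𝒳 α β : Type*} [Fintype Ω]

lemma pr_eq_of_iff' [DecidableEq α] [DecidableEq β] (p : Ω → ℝ) (W : Ω → α) (W' : Ω → β)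
    (v : α) (v' : β) (h : ∀ ω, W ω = v ↔ W' ω = v') : pr p W v = pr p W' v' := by
  unfold pr
  refine Finset.sum_congr rfl fun ω _ => ?_
  by_cases h' : W ω = v
  · simp [h', (h ω).mp h']
  · have : ¬ W' ω = v' := fun hc => h' ((h ω).mpr hc)
    simp [h', this]

lemma pr_nonneg' [DecidableEq α] (p : Ω → ℝ) (hp : ∀ ω, 0 ≤ p ω) (W : Ω → α) (v : α) :
    0 ≤ pr p W v :=
  Finset.sum_nonneg fun ω _ => by by_cases h : W ω = v <;> simp [h, hp ω]

lemma pr_le_pr' [DecidableEq α] [DecidableEq β] (p : Ω → ℝ) (hp : ∀ ω, 0 ≤ p ω)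
    (W : Ω → α) (W' : Ω → β) (v : α) (v' : β) (h : ∀ ω, W ω = v → W' ω = v') :
    pr p W v ≤ pr p W' v' := by
  unfold pr
  refine Finset.sum_le_sum fun ω _ => ?_
  by_cases h' : W ω = v
  · simp [h', h ω h']
  · by_cases h'' : W' ω = v' <;> simp [h', h'', hp ω]

lemma le_pr' [DecidableEq α] (p : Ω → ℝ) (hp : ∀ ω, 0 ≤ p ω) (W : Ω → α) (ω : Ω) :
    p ω ≤ pr p W (W ω) := by
  unfold pr
  refine Finset.single_le_sum (f := fun ω' => if W ω' = W ω then p ω' else 0)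
    (fun ω' _ => ?_) (Finset.mem_univ ω) |>.trans_eq' (by simp)
  by_cases h : W ω' = W ω <;> simp [h, hp ω']

lemma pr_congr_ae' [DecidableEq α] (p : Ω → ℝ) (W W' : Ω → α)
    (h : ∀ ω, p ω ≠ 0 → W ω = W' ω) (v : α) : pr p W v = pr p W' v := by
  unfold pr
  refine Finset.sum_congr rfl fun ω _ => ?_
  by_cases hp : p ω = 0
  · by_cases h1 : W ω = v <;> by_cases h2 : W' ω = v <;> simp [h1, h2, hp]
  · rw [h ω hp]

lemma H_congr_ae' [Fintype α] [DecidableEq α] (p : Ω → ℝ) (W W' : Ω → α)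
    (h : ∀ ω, p ω ≠ 0 → W ω = W' ω) : H p W = H p W' := by
  unfold H
  congr 1
  exact Finset.sum_congr rfl fun v _ => by rw [pr_congr_ae' p W W' h v]

/-- fiber lemma with extra component -/
lemma pr_fiber [Fintype 𝒳] [DecidableEq 𝒳] [DecidableEq α] [DecidableEq β]
    (p : Ω → ℝ) (X : Ω → 𝒳) (g : 𝒳 → α) (W : Ω → β) (c : α) (w : β) :
    pr p (fun ω => (g (X ω), W ω)) (c, w)
      = ∑ x, if g x = c then pr p (fun ω => (X ω, W ω)) (x, w) else 0 := by
  unfold pr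
  simp only [Prod.mk.injEq]
  have : ∀ x : 𝒳, (if g x = c then ∑ ω, if X ω = x ∧ W ω = w then p ω else 0 else 0)
      = ∑ ω, if g x = c then (if X ω = x ∧ W ω = w then p ω else 0) else 0 := by
    intro x; split <;> simp
  simp only [this]
  rw [Finset.sum_comm]
  refine Finset.sum_congr rfl fun ω _ => ?_
  rw [show (∑ x, if g x = c then if X ω = x ∧ W ω = w then p ω else 0 else 0)
      = ∑ x, if x = X ω then (if g (X ω) = c ∧ W ω = w then p ω else 0) else 0 from ?_]
  · rw [Finset.sum_ite_eq' Finset.univ (X ω)]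
    simp [ite_and]
  · refine Finset.sum_congr rfl fun x _ => ?_
    by_cases hx : x = X ω
    · subst hx; by_cases h1 : g (X ω) = c <;> by_cases h2 : W ω = w <;> simp [h1, h2]
    · have : ¬ (X ω = x ∧ W ω = w) := fun ⟨h1, _⟩ => hx h1.symm
      simp [hx, this]

/-- fiber lemma without extra component -/
lemma pr_fiber' [Fintype 𝒳] [DecidableEq 𝒳] [DecidableEq α]
    (p : Ω → ℝ) (X : Ω → 𝒳) (g : 𝒳 → α) (c : α) :
    pr p (fun ω => g (X ω)) c = ∑ x, if g x = c then pr p X x else 0 := by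
  have h1 : pr p (fun ω => g (X ω)) c = pr p (fun ω => (g (X ω), ())) (c, ()) := by
    unfold pr; exact Finset.sum_congr rfl fun ω _ => by simp
  rw [h1, pr_fiber]
  refine Finset.sum_congr rfl fun x _ => ?_
  congr 1
  unfold pr; exact Finset.sum_congr rfl fun ω _ => by simp

/-- entropy of (g ∘ Z, Z) equals entropy of Z -/
lemma H_comp_pair [Fintype 𝒳] [DecidableEq 𝒳] [Fintype α] [DecidableEq α]
    (p : Ω → ℝ) (Z : Ω → 𝒳) (g : 𝒳 → α) :
    H p (fun ω => (g (Z ω), Z ω)) = H p Z := by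
  unfold H
  congr 1
  rw [Fintype.sum_prod_type]
  have key : ∀ (a : α) (x : 𝒳), pr p (fun ω => (g (Z ω), Z ω)) (a, x)
      = if g x = a then pr p Z x else 0 := by
    intro a x
    by_cases h : g x = a
    · rw [if_pos h]
      unfold pr
      refine Finset.sum_congr rfl fun ω _ => ?_
      by_cases hz : Z ω = x
      · simp [hz, h]
      · have : ¬ ((g (Z ω), Z ω) = (a, x)) := fun hc => hz (congrArg Prod.snd hc)
        simp [hz, this]
    · rw [if_neg h]
      unfold pr
      refine Finset.sum_eq_zero fun ω _ => ?_
      have : ¬ ((g (Z ω), Z ω) = (a, x)) := by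
        intro hc
        have h1 : Z ω = x := congrArg Prod.snd hc
        have h2 : g (Z ω) = a := congrArg Prod.fst hc
        exact h (h1 ▸ h2)
      simp [this]
  simp only [key]
  rw [Finset.sum_comm]
  refine Finset.sum_congr rfl fun x _ => ?_
  have : ∀ a : α, (if g x = a then pr p Z x else 0) * Real.logb 2 (if g x = a then pr p Z x else 0)
      = if g x = a then pr p Z x * Real.logb 2 (pr p Z x) else 0 := by
    intro a; split <;> simp
  simp only [this]
  rw [Finset.sum_ite_eq Finset.univ (g x)]
  simp

end Helpers

/-- double Markov conditions X–Y–Q and Y–X–Q yield a common function Q'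
(a deterministic function of X and of Y, since H(Q'|X)=H(Q'|Y)=0; as a function of X it can
be taken with alphabet 𝒳) with XY–Q'–Q a Markov chain. -/
theorem double_markov_lemma {Ω 𝒳 𝒴 𝒬 : Type*} [Fintype Ω] [Fintype 𝒳] [DecidableEq 𝒳]
    [Fintype 𝒴] [DecidableEq 𝒴] [Fintype 𝒬] [DecidableEq 𝒬]
    (p : Ω → ℝ) (X : Ω → 𝒳) (Y : Ω → 𝒴) (Q : Ω → 𝒬)
    (hp : IsPMF p)
    (hXYQ : MarkovPmf p X Y Q)
    (hYXQ : MarkovPmf p Y X Q) :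
    ∃ Q' : Ω → 𝒳,
      condH p Q' X = 0 ∧ condH p Q' Y = 0 ∧
      MarkovPmf p (fun ω => (X ω, Y ω)) Q' Q := by
  classical
  obtain ⟨hp0, hp1⟩ := hp
  -- Ω is nonempty
  have hΩ : Nonempty Ω := by
    rcases isEmpty_or_nonempty Ω with hE | hN
    · exfalso; rw [Finset.sum_of_isEmpty] at hp1; norm_num at hp1
    · exact hN
  have h𝒳 : Nonempty 𝒳 := ⟨X (Classical.choice hΩ)⟩
  -- base relation and its equivalence closure
  set r : 𝒳 → 𝒳 → Prop := fun a b =>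
    ∃ y, pr p (fun ω => (X ω, Y ω)) (a, y) ≠ 0 ∧ pr p (fun ω => (X ω, Y ω)) (b, y) ≠ 0 with hr
  letI s : Setoid 𝒳 := Relation.EqvGen.setoid r
  set f : 𝒳 → 𝒳 := fun x => (Quotient.mk s x).out with hf
  have f_sound : ∀ a b : 𝒳, Relation.EqvGen r a b → f a = f b := by
    intro a b h
    exact congrArg Quotient.out (Quotient.sound h)
  have f_exact : ∀ a b : 𝒳, f a = f b → Relation.EqvGen r a b := by
    intro a b h
    exact Quotient.exact (Quotient.out_inj.mp h)
  -- reorderings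
  have reorder3 : ∀ (x : 𝒳) (y : 𝒴) (q : 𝒬),
      pr p (fun ω => (Y ω, X ω, Q ω)) (y, x, q) = pr p (fun ω => (X ω, Y ω, Q ω)) (x, y, q) := by
    intro x y q
    refine pr_eq_of_iff' p _ _ _ _ fun ω => ?_
    simp only [Prod.mk.injEq]
    tauto
  have reorder2 : ∀ (x : 𝒳) (y : 𝒴),
      pr p (fun ω => (Y ω, X ω)) (y, x) = pr p (fun ω => (X ω, Y ω)) (x, y) := by
    intro x y
    refine pr_eq_of_iff' p _ _ _ _ fun ω => ?_
    simp only [Prod.mk.injEq]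
    tauto
  -- conditional law: pr(X,Q)(a,q) * prY y = pr(Y,Q)(y,q) * prX a  whenever pr(X,Y)(a,y) ≠ 0
  have law : ∀ (a : 𝒳) (y : 𝒴), pr p (fun ω => (X ω, Y ω)) (a, y) ≠ 0 → ∀ q : 𝒬,
      pr p (fun ω => (X ω, Q ω)) (a, q) * pr p Y y
        = pr p (fun ω => (Y ω, Q ω)) (y, q) * pr p X a := by
    intro a y hay q
    have h1 := hYXQ y a q
    rw [reorder3 a y q, reorder2 a y] at h1
    have h2 := hXYQ a y q
    have hxa : pr p X a ≠ 0 := by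
      have := pr_le_pr' p hp0 (fun ω => (X ω, Y ω)) X (a, y) a
        (fun ω h => congrArg Prod.fst h)
      have := lt_of_le_of_ne (pr_nonneg' p hp0 (fun ω => (X ω, Y ω)) (a, y)) (Ne.symm hay)
      nlinarith [pr_nonneg' p hp0 X a]
    have hy : pr p Y y ≠ 0 := by
      have := pr_le_pr' p hp0 (fun ω => (X ω, Y ω)) Y (a, y) y
        (fun ω h => congrArg Prod.snd h)
      have := lt_of_le_of_ne (pr_nonneg' p hp0 (fun ω => (X ω, Y ω)) (a, y)) (Ne.symm hay)
      nlinarith [pr_nonneg' p hp0 Y y]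
    apply mul_left_cancel₀ hay
    linear_combination (pr p X a) * h2 - (pr p Y y) * h1
  -- invariant along the equivalence closure
  have inv : ∀ a b : 𝒳, Relation.EqvGen r a b → a = b ∨
      (pr p X a ≠ 0 ∧ pr p X b ≠ 0 ∧ ∀ q : 𝒬,
        pr p (fun ω => (X ω, Q ω)) (a, q) * pr p X b
          = pr p (fun ω => (X ω, Q ω)) (b, q) * pr p X a) := by
    intro a b h
    induction h with
    | rel a b hab =>
      obtain ⟨y0, ha, hb⟩ := hab
      have hxa : pr p X a ≠ 0 := by
        have := pr_le_pr' p hp0 (fun ω => (X ω, Y ω)) X (a, y0) a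
          (fun ω h => congrArg Prod.fst h)
        have := lt_of_le_of_ne (pr_nonneg' p hp0 (fun ω => (X ω, Y ω)) (a, y0)) (Ne.symm ha)
        nlinarith [pr_nonneg' p hp0 X a]
      have hxb : pr p X b ≠ 0 := by
        have := pr_le_pr' p hp0 (fun ω => (X ω, Y ω)) X (b, y0) b
          (fun ω h => congrArg Prod.fst h)
        have := lt_of_le_of_ne (pr_nonneg' p hp0 (fun ω => (X ω, Y ω)) (b, y0)) (Ne.symm hb)
        nlinarith [pr_nonneg' p hp0 X b]
      have hy : pr p Y y0 ≠ 0 := by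
        have := pr_le_pr' p hp0 (fun ω => (X ω, Y ω)) Y (a, y0) y0
          (fun ω h => congrArg Prod.snd h)
        have := lt_of_le_of_ne (pr_nonneg' p hp0 (fun ω => (X ω, Y ω)) (a, y0)) (Ne.symm ha)
        nlinarith [pr_nonneg' p hp0 Y y0]
      refine Or.inr ⟨hxa, hxb, fun q => ?_⟩
      have e1 := law a y0 ha q
      have e2 := law b y0 hb q
      apply mul_right_cancel₀ hy
      linear_combination (pr p X b) * e1 - (pr p X a) * e2
    | refl a => exact Or.inl rfl
    | symm a b _ ih =>
      rcases ih with h | ⟨h1, h2, h3⟩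
      · exact Or.inl h.symm
      · exact Or.inr ⟨h2, h1, fun q => (h3 q).symm⟩
    | trans a b c _ _ ih1 ih2 =>
      rcases ih1 with h | ⟨ha, hb, hab⟩
      · rwa [h]
      · rcases ih2 with h | ⟨hb', hc, hbc⟩
        · rw [← h]; exact Or.inr ⟨ha, hb, hab⟩
        · refine Or.inr ⟨ha, hc, fun q => ?_⟩
          apply mul_left_cancel₀ hb
          linear_combination (pr p X c) * hab q + (pr p X a) * hbc q
  -- the key "star" identity
  have star : ∀ x x' : 𝒳, Relation.EqvGen r x x' → ∀ (y : 𝒴) (q : 𝒬),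
      pr p (fun ω => (X ω, Y ω, Q ω)) (x, y, q) * pr p X x'
        = pr p (fun ω => (X ω, Y ω)) (x, y) * pr p (fun ω => (X ω, Q ω)) (x', q) := by
    intro x x' hxx' y q
    have base := hYXQ y x q
    rw [reorder3 x y q, reorder2 x y] at base
    rcases inv x x' hxx' with h | ⟨hx, hx', heq⟩
    · rw [← h]; exact base
    · apply mul_right_cancel₀ hx
      linear_combination (pr p X x') * base
        + (pr p (fun ω => (X ω, Y ω)) (x, y)) * heq q
  -- the candidate Q'
  refine ⟨fun ω => f (X ω), ?_, ?_, ?_⟩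
  · -- condH Q' X = 0
    unfold condH
    rw [H_comp_pair p X f]
    ring
  · -- condH Q' Y = 0
    set g : 𝒴 → 𝒳 := fun y =>
      if h : ∃ x, pr p (fun ω => (X ω, Y ω)) (x, y) ≠ 0 then f h.choose
      else Classical.choice h𝒳 with hg
    have hae : ∀ ω, p ω ≠ 0 → (f (X ω), Y ω) = (g (Y ω), Y ω) := by
      intro ω hω
      have hpω : 0 < p ω := lt_of_le_of_ne (hp0 ω) (Ne.symm hω)
      have hpos : pr p (fun ω' => (X ω', Y ω')) (X ω, Y ω) ≠ 0 := by
        have := le_pr' p hp0 (fun ω' => (X ω', Y ω')) ω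
        intro hc; rw [hc] at this; linarith
      have hex : ∃ x, pr p (fun ω' => (X ω', Y ω')) (x, Y ω) ≠ 0 := ⟨X ω, hpos⟩
      have : g (Y ω) = f hex.choose := by rw [hg]; exact dif_pos hex
      rw [this]
      refine Prod.ext ?_ rfl
      exact f_sound _ _ (Relation.EqvGen.rel _ _ ⟨Y ω, hpos, hex.choose_spec⟩)
    unfold condH
    rw [H_congr_ae' p _ _ hae, H_comp_pair p Y g]
    ring
  · -- Markov chain
    rintro ⟨x, y⟩ c q
    have hL1 : pr p (fun ω => ((X ω, Y ω), f (X ω), Q ω)) ((x, y), c, q)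
        = if f x = c then pr p (fun ω => (X ω, Y ω, Q ω)) (x, y, q) else 0 := by
      by_cases h : f x = c
      · rw [if_pos h]
        refine pr_eq_of_iff' p _ _ _ _ fun ω => ?_
        simp only [Prod.mk.injEq]
        constructor
        · rintro ⟨⟨h1, h2⟩, _, h4⟩; exact ⟨h1, h2, h4⟩
        · rintro ⟨h1, h2, h4⟩; exact ⟨⟨h1, h2⟩, by rw [h1, h], h4⟩
      · rw [if_neg h]
        unfold pr
        refine Finset.sum_eq_zero fun ω _ => ?_
        rw [if_neg]
        simp only [Prod.mk.injEq]
        rintro ⟨⟨h1, _⟩, h3, _⟩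
        exact h (h1 ▸ h3)
    have hR1 : pr p (fun ω => ((X ω, Y ω), f (X ω))) ((x, y), c)
        = if f x = c then pr p (fun ω => (X ω, Y ω)) (x, y) else 0 := by
      by_cases h : f x = c
      · rw [if_pos h]
        refine pr_eq_of_iff' p _ _ _ _ fun ω => ?_
        simp only [Prod.mk.injEq]
        constructor
        · rintro ⟨⟨h1, h2⟩, _⟩; exact ⟨h1, h2⟩
        · rintro ⟨h1, h2⟩; exact ⟨⟨h1, h2⟩, by rw [h1, h]⟩
      · rw [if_neg h]
        unfold pr
        refine Finset.sum_eq_zero fun ω _ => ?_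
        rw [if_neg]
        simp only [Prod.mk.injEq]
        rintro ⟨⟨h1, _⟩, h3⟩
        exact h (h1 ▸ h3)
    have hL2 : pr p (fun ω => f (X ω)) c = ∑ x', if f x' = c then pr p X x' else 0 :=
      pr_fiber' p X f c
    have hR2 : pr p (fun ω => (f (X ω), Q ω)) (c, q)
        = ∑ x', if f x' = c then pr p (fun ω => (X ω, Q ω)) (x', q) else 0 :=
      pr_fiber p X f Q c q
    show pr p (fun ω => ((X ω, Y ω), f (X ω), Q ω)) ((x, y), c, q) * pr p (fun ω => f (X ω)) c
      = pr p (fun ω => ((X ω, Y ω), f (X ω))) ((x, y), c)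
        * pr p (fun ω => (f (X ω), Q ω)) (c, q)
    rw [hL1, hR1, hL2, hR2]
    by_cases h : f x = c
    · rw [if_pos h, if_pos h, Finset.mul_sum, Finset.mul_sum]
      refine Finset.sum_congr rfl fun x' _ => ?_
      by_cases h' : f x' = c
      · rw [if_pos h', if_pos h']
        exact star x x' (f_exact x x' (h.trans h'.symm)) y q
      · rw [if_neg h', if_neg h']
        ring
    · rw [if_neg h, if_neg h]
      ring
end

section
/- If X, Y, Q satisfy the double Markov conditions X–Y–Q and Y–X–Q, and Q' is the common function from the double-Markov lemma (H(Q'|X)=H(Q'|Y)=0 and XY–Q'–Q), then I(XY;Q) ≤ H(Q'), with equality if and only if H(Q'|Q)=0. -/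
open Finset

set_option linter.unusedSectionVars false

section helpers
variable {Ω 𝒜 ℬ 𝒞 : Type*} [Fintype Ω] [Fintype 𝒜] [DecidableEq 𝒜]
  [Fintype ℬ] [DecidableEq ℬ] [Fintype 𝒞] [DecidableEq 𝒞] {p : Ω → ℝ}

lemma pr_nonneg (hp : IsPMF p) (X : Ω → 𝒜) (x : 𝒜) : 0 ≤ pr p X x := by
  refine Finset.sum_nonneg fun ω _ => ?_
  split <;> simp [hp.1 ω]

lemma pr_mono (hp : IsPMF p) {𝒮 𝒯 : Type*} [DecidableEq 𝒮] [DecidableEq 𝒯]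
    {W : Ω → 𝒮} {V : Ω → 𝒯} {w : 𝒮} {v : 𝒯}
    (h : ∀ ω, W ω = w → V ω = v) : pr p W w ≤ pr p V v := by
  refine Finset.sum_le_sum fun ω _ => ?_
  by_cases hw : W ω = w
  · simp [hw, h ω hw]
  · simp only [if_neg hw]
    split <;> simp [hp.1 ω]

lemma sum_pr_pair_right (A : Ω → 𝒜) (B : Ω → ℬ) (a : 𝒜) :
    ∑ b, pr p (fun ω => (A ω, B ω)) (a, b) = pr p A a := by
  unfold pr
  rw [Finset.sum_comm]
  refine Finset.sum_congr rfl fun ω _ => ?_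
  simp only [Prod.mk.injEq, ite_and]
  by_cases hA : A ω = a <;> simp [hA]

lemma sum_pr_pair_left (A : Ω → 𝒜) (B : Ω → ℬ) (b : ℬ) :
    ∑ a, pr p (fun ω => (A ω, B ω)) (a, b) = pr p B b := by
  unfold pr
  rw [Finset.sum_comm]
  refine Finset.sum_congr rfl fun ω _ => ?_
  simp only [Prod.mk.injEq, ite_and]
  by_cases hB : B ω = b <;> simp [hB]

lemma sum_pr_triple_c (A : Ω → 𝒜) (B : Ω → ℬ) (C : Ω → 𝒞) (a : 𝒜) (b : ℬ) :
    ∑ c, pr p (fun ω => (A ω, B ω, C ω)) (a, b, c) = pr p (fun ω => (A ω, B ω)) (a, b) := by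
  unfold pr
  rw [Finset.sum_comm]
  refine Finset.sum_congr rfl fun ω _ => ?_
  simp only [Prod.mk.injEq, ite_and]
  by_cases hA : A ω = a <;> by_cases hB : B ω = b <;> simp [hA, hB]

lemma sum_pr_triple_a (A : Ω → 𝒜) (B : Ω → ℬ) (C : Ω → 𝒞) (b : ℬ) (c : 𝒞) :
    ∑ a, pr p (fun ω => (A ω, B ω, C ω)) (a, b, c) = pr p (fun ω => (B ω, C ω)) (b, c) := by
  unfold pr
  rw [Finset.sum_comm]
  refine Finset.sum_congr rfl fun ω _ => ?_
  simp only [Prod.mk.injEq, ite_and]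
  by_cases hB : B ω = b <;> by_cases hC : C ω = c <;> simp [hB, hC]

lemma H_comp_inj {𝒮 𝒯 : Type*} [Fintype 𝒮] [DecidableEq 𝒮] [Fintype 𝒯] [DecidableEq 𝒯]
    (g : 𝒮 → 𝒯) (hg : Function.Injective g) (W : Ω → 𝒮) :
    H p (fun ω => g (W ω)) = H p W := by
  have key : ∀ s, pr p (fun ω => g (W ω)) (g s) = pr p W s := fun s =>
    Finset.sum_congr rfl fun ω _ => by simp [hg.eq_iff]
  have hz : ∀ t ∉ Finset.univ.image g, pr p (fun ω => g (W ω)) t = 0 := by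
    intro t ht
    refine Finset.sum_eq_zero fun ω _ => ?_
    have : g (W ω) ≠ t := fun h => ht (by simp [← h])
    simp [this]
  unfold H
  congr 1
  rw [← Finset.sum_subset (Finset.subset_univ (Finset.univ.image g))
      (fun t _ ht => by simp [hz t ht]),
    Finset.sum_image (fun a _ a' _ h => hg h)]
  exact Finset.sum_congr rfl fun s _ => by rw [key]

lemma H_pair_of_fun (A : Ω → 𝒜) (B : Ω → ℬ) (g : 𝒜 → ℬ)
    (hg : ∀ ω, p ω ≠ 0 → B ω = g (A ω)) :
    H p (fun ω => (A ω, B ω)) = H p A := by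
  have key : ∀ a b, pr p (fun ω => (A ω, B ω)) (a, b) =
      if b = g a then pr p A a else 0 := by
    intro a b
    by_cases hb : b = g a
    · rw [if_pos hb]
      refine Finset.sum_congr rfl fun ω _ => ?_
      by_cases hpω : p ω = 0
      · split <;> split <;> simp [hpω]
      · have := hg ω hpω
        simp only [Prod.mk.injEq]
        by_cases hA : A ω = a <;> simp [hA, this, hb]
    · rw [if_neg hb]
      refine Finset.sum_eq_zero fun ω _ => ?_
      by_cases hpω : p ω = 0
      · split <;> simp [hpω]
      · have := hg ω hpω
        have : (A ω, B ω) ≠ (a, b) := by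
          rintro h
          rw [Prod.mk.injEq] at h
          exact hb (by rw [← h.2, this, h.1])
        simp [this]
  unfold H
  congr 1
  rw [Fintype.sum_prod_type]
  refine Finset.sum_congr rfl fun a _ => ?_
  rw [Finset.sum_congr rfl fun b _ => by rw [key a b]]
  simp

end helpers

section helpers2
variable {Ω 𝒜 ℬ 𝒞 : Type*} [Fintype Ω] [Fintype 𝒜] [DecidableEq 𝒜]
  [Fintype ℬ] [DecidableEq ℬ] [Fintype 𝒞] [DecidableEq 𝒞] {p : Ω → ℝ}

lemma condH_expand (A : Ω → 𝒜) (B : Ω → ℬ) :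
    condH p A B = ∑ a, ∑ b, pr p (fun ω => (A ω, B ω)) (a, b) *
      (Real.logb 2 (pr p B b) - Real.logb 2 (pr p (fun ω => (A ω, B ω)) (a, b))) := by
  unfold condH H
  rw [Fintype.sum_prod_type]
  have : ∑ b, pr p B b * Real.logb 2 (pr p B b)
      = ∑ a, ∑ b, pr p (fun ω => (A ω, B ω)) (a, b) * Real.logb 2 (pr p B b) := by
    rw [Finset.sum_comm]
    refine Finset.sum_congr rfl fun b _ => ?_
    rw [← Finset.sum_mul, sum_pr_pair_left A B b]
  have e : ∑ a, ∑ b, pr p (fun ω => (A ω, B ω)) (a, b) *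
      (Real.logb 2 (pr p B b) - Real.logb 2 (pr p (fun ω => (A ω, B ω)) (a, b))) =
      (∑ a, ∑ b, pr p (fun ω => (A ω, B ω)) (a, b) * Real.logb 2 (pr p B b)) -
      (∑ a, ∑ b, pr p (fun ω => (A ω, B ω)) (a, b) *
        Real.logb 2 (pr p (fun ω => (A ω, B ω)) (a, b))) := by
    simp_rw [mul_sub, Finset.sum_sub_distrib]
  rw [this, e]
  ring

lemma condH_term_nonneg (hp : IsPMF p) (A : Ω → 𝒜) (B : Ω → ℬ) (a : 𝒜) (b : ℬ) :
    0 ≤ pr p (fun ω => (A ω, B ω)) (a, b) *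
      (Real.logb 2 (pr p B b) - Real.logb 2 (pr p (fun ω => (A ω, B ω)) (a, b))) := by
  rcases eq_or_lt_of_le (pr_nonneg hp (fun ω => (A ω, B ω)) (a, b)) with h0 | h0
  · rw [← h0]; simp
  · refine mul_nonneg h0.le (sub_nonneg.2 ?_)
    have hle : pr p (fun ω => (A ω, B ω)) (a, b) ≤ pr p B b := pr_mono hp (fun ω h => by
      simp only [Prod.mk.injEq] at h; exact h.2)
    exact Real.logb_le_logb_of_le one_lt_two h0 hle

lemma condH_nonneg (hp : IsPMF p) (A : Ω → 𝒜) (B : Ω → ℬ) : 0 ≤ condH p A B := by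
  rw [condH_expand]
  exact Finset.sum_nonneg fun a _ => Finset.sum_nonneg fun b _ => condH_term_nonneg hp A B a b

lemma condH_zero (hp : IsPMF p) (A : Ω → 𝒜) (B : Ω → ℬ) (h : condH p A B = 0) :
    ∀ a b, pr p (fun ω => (A ω, B ω)) (a, b) ≠ 0 →
      pr p (fun ω => (A ω, B ω)) (a, b) = pr p B b := by
  intro a b hab
  rw [condH_expand] at h
  have hterm : ∀ a b, pr p (fun ω => (A ω, B ω)) (a, b) *
      (Real.logb 2 (pr p B b) - Real.logb 2 (pr p (fun ω => (A ω, B ω)) (a, b))) = 0 := by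
    have h1 := (Finset.sum_eq_zero_iff_of_nonneg (fun a _ =>
      Finset.sum_nonneg fun b _ => condH_term_nonneg hp A B a b)).1 h
    intro a b
    exact (Finset.sum_eq_zero_iff_of_nonneg (fun b _ =>
      condH_term_nonneg hp A B a b)).1 (h1 a (Finset.mem_univ a)) b (Finset.mem_univ b)
  have := hterm a b
  have hpos : 0 < pr p (fun ω => (A ω, B ω)) (a, b) :=
    lt_of_le_of_ne (pr_nonneg hp _ _) (Ne.symm hab)
  have hlog : Real.logb 2 (pr p B b) = Real.logb 2 (pr p (fun ω => (A ω, B ω)) (a, b)) := by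
    rcases mul_eq_zero.1 this with h' | h'
    · exact absurd h' hab
    · linarith [sub_eq_zero.1 h']
  have hBpos : 0 < pr p B b := lt_of_lt_of_le hpos
    (pr_mono hp fun ω h => by rw [Prod.mk.injEq] at h; exact h.2)
  exact (Real.logb_injOn_pos (b := 2) one_lt_two
    (Set.mem_Ioi.2 hBpos) (Set.mem_Ioi.2 hpos) hlog).symm

lemma markov_H (hp : IsPMF p) (A : Ω → 𝒜) (B : Ω → ℬ) (C : Ω → 𝒞)
    (h : MarkovPmf p A B C) :
    H p (fun ω => (A ω, B ω, C ω)) =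
      H p (fun ω => (A ω, B ω)) + H p (fun ω => (B ω, C ω)) - H p B := by
  have key : ∀ a b c, pr p (fun ω => (A ω, B ω, C ω)) (a, b, c) *
      Real.logb 2 (pr p (fun ω => (A ω, B ω, C ω)) (a, b, c)) =
      pr p (fun ω => (A ω, B ω, C ω)) (a, b, c) *
      (Real.logb 2 (pr p (fun ω => (A ω, B ω)) (a, b)) +
       Real.logb 2 (pr p (fun ω => (B ω, C ω)) (b, c)) - Real.logb 2 (pr p B b)) := by
    intro a b c
    rcases eq_or_lt_of_le (pr_nonneg hp (fun ω => (A ω, B ω, C ω)) (a, b, c)) with h0 | h0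
    · rw [← h0]; ring
    · have hab : 0 < pr p (fun ω => (A ω, B ω)) (a, b) :=
        lt_of_lt_of_le h0 (pr_mono hp fun ω hw => by
          simp only [Prod.mk.injEq] at hw ⊢; exact ⟨hw.1, hw.2.1⟩)
      have hbc : 0 < pr p (fun ω => (B ω, C ω)) (b, c) :=
        lt_of_lt_of_le h0 (pr_mono hp fun ω hw => by
          simp only [Prod.mk.injEq] at hw ⊢; exact ⟨hw.2.1, hw.2.2⟩)
      have hb : 0 < pr p B b :=
        lt_of_lt_of_le h0 (pr_mono hp fun ω hw => by
          simp only [Prod.mk.injEq] at hw; exact hw.2.1)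
      have ht : pr p (fun ω => (A ω, B ω, C ω)) (a, b, c) =
          pr p (fun ω => (A ω, B ω)) (a, b) * pr p (fun ω => (B ω, C ω)) (b, c) / pr p B b := by
        field_simp
        exact h a b c
      rw [ht, Real.logb_div (by positivity) hb.ne', Real.logb_mul hab.ne' hbc.ne']
  have main : ∑ a, ∑ b, ∑ c, pr p (fun ω => (A ω, B ω, C ω)) (a, b, c) *
      Real.logb 2 (pr p (fun ω => (A ω, B ω, C ω)) (a, b, c)) =
      (∑ a, ∑ b, pr p (fun ω => (A ω, B ω)) (a, b) *
        Real.logb 2 (pr p (fun ω => (A ω, B ω)) (a, b))) +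
      (∑ b, ∑ c, pr p (fun ω => (B ω, C ω)) (b, c) *
        Real.logb 2 (pr p (fun ω => (B ω, C ω)) (b, c))) -
      ∑ b, pr p B b * Real.logb 2 (pr p B b) := by
    have S1 : ∑ a, ∑ b, ∑ c, pr p (fun ω => (A ω, B ω, C ω)) (a, b, c) *
        Real.logb 2 (pr p (fun ω => (A ω, B ω)) (a, b)) =
        ∑ a, ∑ b, pr p (fun ω => (A ω, B ω)) (a, b) *
        Real.logb 2 (pr p (fun ω => (A ω, B ω)) (a, b)) := by
      refine Finset.sum_congr rfl fun a _ => Finset.sum_congr rfl fun b _ => ?_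
      rw [← Finset.sum_mul, sum_pr_triple_c]
    have S2 : ∑ a, ∑ b, ∑ c, pr p (fun ω => (A ω, B ω, C ω)) (a, b, c) *
        Real.logb 2 (pr p (fun ω => (B ω, C ω)) (b, c)) =
        ∑ b, ∑ c, pr p (fun ω => (B ω, C ω)) (b, c) *
        Real.logb 2 (pr p (fun ω => (B ω, C ω)) (b, c)) := by
      rw [Finset.sum_comm]
      refine Finset.sum_congr rfl fun b _ => ?_
      rw [Finset.sum_comm]
      refine Finset.sum_congr rfl fun c _ => ?_
      rw [← Finset.sum_mul, sum_pr_triple_a]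
    have S3 : ∑ a, ∑ b, ∑ c, pr p (fun ω => (A ω, B ω, C ω)) (a, b, c) *
        Real.logb 2 (pr p B b) =
        ∑ b, pr p B b * Real.logb 2 (pr p B b) := by
      rw [Finset.sum_comm]
      refine Finset.sum_congr rfl fun b _ => ?_
      have h2 : ∀ a, ∑ c, pr p (fun ω => (A ω, B ω, C ω)) (a, b, c) *
          Real.logb 2 (pr p B b) = pr p (fun ω => (A ω, B ω)) (a, b) * Real.logb 2 (pr p B b) := by
        intro a; rw [← Finset.sum_mul, sum_pr_triple_c]
      rw [Finset.sum_congr rfl fun a _ => h2 a, ← Finset.sum_mul, sum_pr_pair_left]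
    calc ∑ a, ∑ b, ∑ c, pr p (fun ω => (A ω, B ω, C ω)) (a, b, c) *
        Real.logb 2 (pr p (fun ω => (A ω, B ω, C ω)) (a, b, c))
        = ∑ a, ∑ b, ∑ c, pr p (fun ω => (A ω, B ω, C ω)) (a, b, c) *
          (Real.logb 2 (pr p (fun ω => (A ω, B ω)) (a, b)) +
           Real.logb 2 (pr p (fun ω => (B ω, C ω)) (b, c)) - Real.logb 2 (pr p B b)) :=
        Finset.sum_congr rfl fun a _ => Finset.sum_congr rfl fun b _ =>
          Finset.sum_congr rfl fun c _ => key a b c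
      _ = (∑ a, ∑ b, ∑ c, pr p (fun ω => (A ω, B ω, C ω)) (a, b, c) *
            Real.logb 2 (pr p (fun ω => (A ω, B ω)) (a, b))) +
          (∑ a, ∑ b, ∑ c, pr p (fun ω => (A ω, B ω, C ω)) (a, b, c) *
            Real.logb 2 (pr p (fun ω => (B ω, C ω)) (b, c))) -
          ∑ a, ∑ b, ∑ c, pr p (fun ω => (A ω, B ω, C ω)) (a, b, c) *
            Real.logb 2 (pr p B b) := by
        simp only [mul_sub, mul_add, Finset.sum_add_distrib, Finset.sum_sub_distrib]
      _ = _ := by rw [S1, S2, S3]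
  unfold H
  simp only [Fintype.sum_prod_type]
  linarith [main]
end helpers2

/-- under the double Markov conditions, with Q' the common function from the
double-Markov lemma (H(Q'|X)=H(Q'|Y)=0 and XY–Q'–Q), one has I(XY;Q) ≤ H(Q'),
with equality iff H(Q'|Q)=0. -/
theorem double_markov_entropy_bound {Ω 𝒳 𝒴 𝒬 𝒬' : Type*} [Fintype Ω]
    [Fintype 𝒳] [DecidableEq 𝒳] [Fintype 𝒴] [DecidableEq 𝒴]
    [Fintype 𝒬] [DecidableEq 𝒬] [Fintype 𝒬'] [DecidableEq 𝒬']
    (p : Ω → ℝ) (X : Ω → 𝒳) (Y : Ω → 𝒴) (Q : Ω → 𝒬) (Q' : Ω → 𝒬')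
    (hp : IsPMF p)
    (hXYQ : MarkovPmf p X Y Q)
    (hYXQ : MarkovPmf p Y X Q)
    (hQ'X : condH p Q' X = 0)
    (hQ'Y : condH p Q' Y = 0)
    (hMC : MarkovPmf p (fun ω => (X ω, Y ω)) Q' Q) :
    MI p (fun ω => (X ω, Y ω)) Q ≤ H p Q' ∧
    (MI p (fun ω => (X ω, Y ω)) Q = H p Q' ↔ condH p Q' Q = 0) := by
  classical
  obtain ⟨ω0, hω0⟩ : ∃ ω, p ω ≠ 0 := by
    by_contra hc
    push_neg at hc
    exact one_ne_zero (hp.2 ▸ Finset.sum_eq_zero fun ω _ => hc ω)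
  haveI : Nonempty 𝒬' := ⟨Q' ω0⟩
  have hpt : ∀ q' x, pr p (fun ω => (Q' ω, X ω)) (q', x) ≠ 0 →
      pr p (fun ω => (Q' ω, X ω)) (q', x) = pr p X x := condH_zero hp Q' X hQ'X
  let f : 𝒳 → 𝒬' := fun x =>
    if h : ∃ q', pr p (fun ω => (Q' ω, X ω)) (q', x) ≠ 0 then h.choose
    else Classical.arbitrary 𝒬'
  have hf : ∀ ω, p ω ≠ 0 → Q' ω = f (X ω) := by
    intro ω hpω
    have hpω' : 0 < p ω := lt_of_le_of_ne (hp.1 ω) (Ne.symm hpω)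
    have h1 : 0 < pr p (fun ω' => (Q' ω', X ω')) (Q' ω, X ω) := by
      have hle : p ω ≤ pr p (fun ω' => (Q' ω', X ω')) (Q' ω, X ω) := by
        have := Finset.single_le_sum
          (f := fun ω' => if (Q' ω', X ω') = (Q' ω, X ω) then p ω' else 0)
          (fun ω' _ => by split <;> simp [hp.1 ω']) (Finset.mem_univ ω)
        simpa [pr] using this
      linarith
    have hex : ∃ q', pr p (fun ω' => (Q' ω', X ω')) (q', X ω) ≠ 0 := ⟨Q' ω, h1.ne'⟩
    have hfx : f (X ω) = hex.choose := dif_pos hex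
    have hq0 := hex.choose_spec
    by_contra hne
    have hne' : Q' ω ≠ hex.choose := fun h => hne (h.trans hfx.symm)
    have e1 := hpt _ _ hq0
    have e2 := hpt _ _ h1.ne'
    have hXpos : 0 < pr p X (X ω) := e2 ▸ h1
    have hsum : pr p X (X ω) = ∑ q', pr p (fun ω' => (Q' ω', X ω')) (q', X ω) :=
      (sum_pr_pair_left Q' X (X ω)).symm
    have hpair : pr p (fun ω' => (Q' ω', X ω')) (Q' ω, X ω) +
        pr p (fun ω' => (Q' ω', X ω')) (hex.choose, X ω) ≤ pr p X (X ω) := by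
      rw [hsum]
      have hsub := Finset.sum_le_sum_of_subset_of_nonneg
        (show ({Q' ω, hex.choose} : Finset 𝒬') ⊆ Finset.univ from Finset.subset_univ _)
        (fun q' _ _ => pr_nonneg hp (fun ω' => (Q' ω', X ω')) (q', X ω))
      rwa [Finset.sum_pair hne'] at hsub
    rw [e1, e2] at hpair
    linarith
  have E4 : H p (fun ω => ((X ω, Y ω), Q' ω)) = H p (fun ω => (X ω, Y ω)) :=
    H_pair_of_fun (fun ω => (X ω, Y ω)) Q' (fun a => f a.1) (fun ω h => hf ω h)
  have E1 : H p (fun ω => (((X ω, Y ω), Q ω), Q' ω)) = H p (fun ω => ((X ω, Y ω), Q ω)) :=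
    H_pair_of_fun (fun ω => ((X ω, Y ω), Q ω)) Q' (fun aq => f aq.1.1) (fun ω h => hf ω h)
  have E2 : H p (fun ω => ((X ω, Y ω), Q' ω, Q ω)) =
      H p (fun ω => (((X ω, Y ω), Q ω), Q' ω)) := by
    have hg : Function.Injective
        (fun t : ((𝒳 × 𝒴) × 𝒬) × 𝒬' => (t.1.1, t.2, t.1.2)) := by
      intro t1 t2 h
      simp only [Prod.mk.injEq, Prod.ext_iff] at h ⊢
      tauto
    exact H_comp_inj _ hg (fun ω => (((X ω, Y ω), Q ω), Q' ω))
  have E3 : H p (fun ω => ((X ω, Y ω), Q' ω, Q ω)) =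
      H p (fun ω => ((X ω, Y ω), Q' ω)) + H p (fun ω => (Q' ω, Q ω)) - H p Q' :=
    markov_H hp (fun ω => (X ω, Y ω)) Q' Q hMC
  have key : MI p (fun ω => (X ω, Y ω)) Q = H p Q' - condH p Q' Q := by
    unfold MI condH
    linarith [E1, E2, E3, E4]
  have hnn : 0 ≤ condH p Q' Q := condH_nonneg hp Q' Q
  exact ⟨by linarith, ⟨fun h => by linarith, fun h => by linarith⟩⟩
end
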